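/- The function f(x) = -√(1 - (1+x)^{-2}) is convex on [0, ∞). -/

import Mathlib

theorem neg_sqrt_dispersion_convex :
    ConvexOn ℝ (Set.Ici (0 : ℝ))
      (fun x : ℝ => -Real.sqrt (1 - ((1 + x) ^ 2)⁻¹)) := by
  set g : ℝ → ℝ := fun x : ℝ => 1 - ((1 + x) ^ 2)⁻¹ with hgdef
  -- g is concave on Ici 0
  have hinv : ConvexOn ℝ (Set.Ici (0 : ℝ)) (fun x : ℝ => ((1 + x) ^ 2)⁻¹) := by
    have h1 : ConvexOn ℝ (Set.Ioi (0 : ℝ)) (fun x : ℝ => x ^ (-2 : ℤ)) :=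
      convexOn_zpow (-2)
    have h2 := h1.translate_right 1
    have h3 : ConvexOn ℝ (Set.Ici (0 : ℝ))
        ((fun x : ℝ => x ^ (-2 : ℤ)) ∘ fun z => 1 + z) := by
      refine h2.subset ?_ (convex_Ici 0)
      intro x hx
      simp only [Set.mem_preimage, Set.mem_Ioi]
      linarith [Set.mem_Ici.mp hx]
    have heq : (fun x : ℝ => ((1 + x) ^ 2)⁻¹) =
        ((fun x : ℝ => x ^ (-2 : ℤ)) ∘ fun z => 1 + z) := by
      funext x
      simp [Function.comp, zpow_neg]
    rw [heq]
    exact h3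
  have hg : ConcaveOn ℝ (Set.Ici (0 : ℝ)) g := by
    have h := hinv.neg.add_const 1
    have heq : g = ((-fun x : ℝ => ((1 + x) ^ 2)⁻¹) + fun _ => 1) := by
      funext x
      simp [hgdef, sub_eq_add_neg, add_comm]
    rw [heq]
    exact h
  -- image of Ici 0 under g is convex
  have himg : Convex ℝ (g '' Set.Ici (0 : ℝ)) := by
    have hcont : ContinuousOn g (Set.Ici (0 : ℝ)) := by
      apply ContinuousOn.sub continuousOn_const
      apply ContinuousOn.inv₀ (by fun_prop)
      intro x hx
      have : (0:ℝ) ≤ x := hx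
      positivity
    exact ((isPreconnected_Ici.image g hcont).ordConnected).convex
  -- image lands in Ici 0
  have hsub : g '' Set.Ici (0 : ℝ) ⊆ Set.Ici (0 : ℝ) := by
    rintro _ ⟨x, hx, rfl⟩
    have hx0 : (0:ℝ) ≤ x := hx
    have h1 : (1:ℝ) ≤ (1 + x) ^ 2 := by nlinarith
    have : ((1 + x) ^ 2)⁻¹ ≤ 1 := by
      rw [inv_le_one_iff₀]; right; exact h1
    simp only [hgdef, Set.mem_Ici]
    linarith
  have hsqrt_img : ConcaveOn ℝ (g '' Set.Ici (0 : ℝ)) Real.sqrt :=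
    (Real.strictConcaveOn_sqrt.concaveOn).subset hsub himg
  have hmono : MonotoneOn Real.sqrt (g '' Set.Ici (0 : ℝ)) :=
    fun a _ b _ hab => Real.sqrt_le_sqrt hab
  have hcomp : ConcaveOn ℝ (Set.Ici (0 : ℝ)) (Real.sqrt ∘ g) :=
    hsqrt_img.comp hg hmono
  have := hcomp.neg
  convert this using 1
  all_goals rfl
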